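/- Let ε denote the empty permutation, and let A be either ∅ or {(0,0)}. For every mesh pattern p with ε^A ≤ p in the mesh pattern poset: μ(ε^A, p) = 1 if p = ε^A; μ(ε^A, p) = −1 if A = ∅ and |cl(p)| + |sh(p)| = 1; and μ(ε^A, p) = 0 otherwise. In particular ε^{(0,0)} is contained in no mesh pattern other than itself. -/

import Mathlib

/-!
# The poset of mesh patterns

A mesh pattern is a permutation of `{1, ..., len}` together with a set of shaded
boxes in the `(len+1) × (len+1)` grid (boxes are indexed by their south-west corner,
so boxes have coordinates in `{0, ..., len} × {0, ..., len}`).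

We normalise the permutation as a function `ℕ → ℕ` (using 1-based indexing) which is
`0` outside of `[1, len]`; this makes equality of mesh patterns coincide with equality
of the underlying data.
-/

structure MeshPattern where
  len : ℕ
  perm : ℕ → ℕ
  sh : Finset (ℕ × ℕ)
  perm_mem : ∀ i, 1 ≤ i → i ≤ len → 1 ≤ perm i ∧ perm i ≤ len
  perm_zero : ∀ i, i = 0 ∨ len < i → perm i = 0
  perm_inj : ∀ i j, 1 ≤ i → i ≤ len → 1 ≤ j → j ≤ len → perm i = perm j → i = j
  perm_surj : ∀ v, 1 ≤ v → v ≤ len → ∃ i, 1 ≤ i ∧ i ≤ len ∧ perm i = v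
  sh_mem : ∀ q ∈ sh, q.1 ≤ len ∧ q.2 ≤ len

namespace MeshPattern

/-- The (1-based) position of the value `v` in the underlying permutation of `m`. -/
noncomputable def pos (m : MeshPattern) (v : ℕ) : ℕ := Function.invFun m.perm v

/-- The dimension of a mesh pattern: length of the permutation plus number of shaded boxes. -/
def dim (m : MeshPattern) : ℕ := m.len + m.sh.card

/-- Given (the position map of an occurrence) `η` of `m` in `p`, the extended column
boundary map: pattern column boundary `i` (for `0 ≤ i ≤ m.len + 1`) is sent to the
corresponding column boundary in `p`.  Boxes of `p` with first coordinate `a` satisfying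
`colExt m p η i ≤ a < colExt m p η (i+1)` are exactly the boxes lying horizontally
within the region corresponding to pattern boxes with first coordinate `i`. -/
def colExt (m p : MeshPattern) (η : ℕ → ℕ) (i : ℕ) : ℕ :=
  if i = 0 then 0 else if i ≤ m.len then η i else p.len + 1

/-- The analogous extended row (value) boundary map. -/
noncomputable def valExt (m p : MeshPattern) (η : ℕ → ℕ) (j : ℕ) : ℕ :=
  if j = 0 then 0 else if j ≤ m.len then p.perm (η (m.pos j)) else p.len + 1

/-- The box `(a, b)` of `p` lies in the region `R_η(i, j)` of the box `(i, j)` of `m`. -/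
def inRegion (m p : MeshPattern) (η : ℕ → ℕ) (i j a b : ℕ) : Prop :=
  colExt m p η i ≤ a ∧ a < colExt m p η (i + 1) ∧
    valExt m p η j ≤ b ∧ b < valExt m p η (j + 1)

/-- The point of `p` at position `y` lies in the open interior of the region `R_η(i, j)`. -/
def interiorPt (m p : MeshPattern) (η : ℕ → ℕ) (i j y : ℕ) : Prop :=
  colExt m p η i < y ∧ y < colExt m p η (i + 1) ∧
    valExt m p η j < p.perm y ∧ p.perm y < valExt m p η (j + 1)

/-- `η` is an occurrence of the mesh pattern `m` in the mesh pattern `p`: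
a (normalised) strictly increasing choice of positions realising the underlying
classical pattern, such that for every shaded box of `m` the corresponding region of `p`
contains no point of `p` in its interior and consists entirely of shaded boxes of `p`. -/
structure IsOcc (m p : MeshPattern) (η : ℕ → ℕ) : Prop where
  zero : ∀ i, i = 0 ∨ m.len < i → η i = 0
  mem : ∀ i, 1 ≤ i → i ≤ m.len → 1 ≤ η i ∧ η i ≤ p.len
  mono : ∀ i j, 1 ≤ i → i < j → j ≤ m.len → η i < η j
  pattern : ∀ i j, 1 ≤ i → i ≤ m.len → 1 ≤ j → j ≤ m.len →
    (m.perm i < m.perm j ↔ p.perm (η i) < p.perm (η j))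
  no_point : ∀ q ∈ m.sh, ∀ y, 1 ≤ y → y ≤ p.len → ¬ interiorPt m p η q.1 q.2 y
  shaded : ∀ q ∈ m.sh, ∀ a b, inRegion m p η q.1 q.2 a b → (a, b) ∈ p.sh

/-- The mesh pattern poset: `m ≤ p` iff there is an occurrence of `m` in `p`. -/
instance : LE MeshPattern := ⟨fun m p => ∃ η, IsOcc m p η⟩

instance : LT MeshPattern := ⟨fun m p => m ≤ p ∧ m ≠ p⟩

/-- `b` covers `a` in the mesh pattern poset. -/
def CovByM (a b : MeshPattern) : Prop := a < b ∧ ¬ ∃ z, a < z ∧ z < b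

open Classical in
/-- The Möbius function of a (locally finite) partial order `r`, computed with a fuel
parameter: `muFuel r n a b` is the Möbius function `μ(a, b)` provided `n` is at least the
length of the longest chain from `a` to `b` (with the convention `μ(a, b) = 0` if
`¬ r a b`). -/
noncomputable def muFuel {α : Type*} (r : α → α → Prop) : ℕ → α → α → ℤ
  | 0, a, b => if a = b then 1 else 0
  | n + 1, a, b =>
      if a = b then 1
      else if r a b then - ∑ᶠ c ∈ {c | r a c ∧ r c b ∧ c ≠ b}, muFuel r n a c
      else 0

/-- The Möbius function of the mesh pattern poset.  Since every chain from `m` to `p` has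
length at most `dim p`, the fuel `dim p + 1` is sufficient, so this is the genuine Möbius
function: `mu m m = 1`, `mu m p = -∑_{m ≤ c < p} mu m c` for `m < p`, and `mu m p = 0`
when `m ≰ p`. -/
noncomputable def mu (m p : MeshPattern) : ℤ := muFuel (· ≤ ·) (p.dim + 1) m p

/-- The classical permutation poset `𝓟`, realised as the subposet of unshaded mesh
patterns (for unshaded patterns, mesh occurrence is exactly classical pattern
containment).  Its Möbius function. -/
noncomputable def muP (σ π : {m : MeshPattern // m.sh = ∅}) : ℤ :=
  muFuel (· ≤ ·) (π.1.len + 1) σ π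

/-- The mesh pattern with underlying identity permutation of length `n`
and shaded boxes `s`. -/
def ofId (n : ℕ) (s : Finset (ℕ × ℕ)) (hs : ∀ q ∈ s, q.1 ≤ n ∧ q.2 ≤ n) : MeshPattern where
  len := n
  perm := fun i => if 1 ≤ i ∧ i ≤ n then i else 0
  sh := s
  perm_mem := by intro i h1 h2; (try dsimp only); rw [if_pos ⟨h1, h2⟩]; omega
  perm_zero := by intro i h; (try dsimp only); rw [if_neg]; omega
  perm_inj := by intro i j h1 h2 h3 h4 h; (try dsimp only at h); rw [if_pos ⟨h1, h2⟩, if_pos ⟨h3, h4⟩] at h; omega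
  perm_surj := by
    intro v h1 h2; exact ⟨v, h1, h2, by (try dsimp only); rw [if_pos ⟨h1, h2⟩]⟩
  sh_mem := hs

/-- The mesh pattern with underlying decreasing permutation of length `n`
and shaded boxes `s`. -/
def ofRev (n : ℕ) (s : Finset (ℕ × ℕ)) (hs : ∀ q ∈ s, q.1 ≤ n ∧ q.2 ≤ n) : MeshPattern where
  len := n
  perm := fun i => if 1 ≤ i ∧ i ≤ n then n + 1 - i else 0
  sh := s
  perm_mem := by intro i h1 h2; (try dsimp only); rw [if_pos ⟨h1, h2⟩]; omega
  perm_zero := by intro i h; (try dsimp only); rw [if_neg]; omega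
  perm_inj := by intro i j h1 h2 h3 h4 h; (try dsimp only at h); rw [if_pos ⟨h1, h2⟩, if_pos ⟨h3, h4⟩] at h; omega
  perm_surj := by
    intro v h1 h2
    exact ⟨n + 1 - v, by omega, by omega, by (try dsimp only); rw [if_pos ⟨by omega, by omega⟩]; omega⟩
  sh_mem := hs

/-- The unshaded singleton mesh pattern `1^∅`. -/
def one0 : MeshPattern := ofId 1 ∅ (by simp)

/-- The empty mesh pattern `ε^∅`. -/
def eps0 : MeshPattern := ofId 0 ∅ (by simp)

/-- The empty mesh pattern `ε^{(0,0)}` with its single box shaded. -/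
def eps00 : MeshPattern := ofId 0 {(0, 0)} (by decide)

/-- The singleton mesh patterns `1^{(a,b)}` for `a b ∈ {0,1}`. -/
def one00 : MeshPattern := ofId 1 {(0, 0)} (by decide)
def one10 : MeshPattern := ofId 1 {(1, 0)} (by decide)
def one01 : MeshPattern := ofId 1 {(0, 1)} (by decide)
def one11 : MeshPattern := ofId 1 {(1, 1)} (by decide)

/-- The mesh pattern `21^{(0,0),(1,0)}`. -/
def pat21 : MeshPattern := ofRev 2 {(0, 0), (1, 0)} (by decide)

/-- Replace the shading of `p` by a subset `A ⊆ sh p` (same underlying permutation):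
this is the mesh pattern `(cl p)^A`. -/
def reshade (p : MeshPattern) (A : Finset (ℕ × ℕ)) (hA : A ⊆ p.sh) : MeshPattern :=
  { p with sh := A, sh_mem := fun q hq => p.sh_mem q (hA hq) }

/-- The occurrence `η` of `s` in `p` uses the shaded box `(a, b) ∈ sh p`. -/
def UsesBox (s p : MeshPattern) (η : ℕ → ℕ) (a b : ℕ) : Prop :=
  (a, b) ∈ p.sh ∧ ∃ i j, (i, j) ∈ s.sh ∧ inRegion s p η i j a b

/-- The position map of the occurrence of `p − x` in `p` avoiding the point at
position `x`. -/
def etaDel (p : MeshPattern) (x : ℕ) : ℕ → ℕ := fun i =>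
  if 1 ≤ i ∧ i ≤ p.len - 1 then (if i < x then i else i + 1) else 0

/-- The underlying permutation of the pattern obtained from `p` by deleting the point at
position `x`. -/
def delPerm (p : MeshPattern) (x : ℕ) : ℕ → ℕ := fun i =>
  if 1 ≤ i ∧ i ≤ p.len - 1 then
    (if p.perm (etaDel p x i) < p.perm x then p.perm (etaDel p x i)
     else p.perm (etaDel p x i) - 1)
  else 0

/-- `q` is the mesh pattern `p − x` obtained from `p` by deleting the point at position
`x` (where `1 ≤ x ≤ len p`): the underlying permutation is obtained by deleting that
letter, and a box of `q` is shaded exactly when the corresponding region of `p` (under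
the occurrence `etaDel p x`) is entirely shaded and contains no point of `p` in its
interior.  In particular `etaDel p x` is an occurrence of `q` in `p`. -/
def IsDeletion (p : MeshPattern) (x : ℕ) (q : MeshPattern) : Prop :=
  1 ≤ x ∧ x ≤ p.len ∧ q.len + 1 = p.len ∧ q.perm = delPerm p x ∧
    ∀ i j : ℕ, ((i, j) ∈ q.sh ↔ i ≤ q.len ∧ j ≤ q.len ∧
      (∀ a b, inRegion q p (etaDel p x) i j a b → (a, b) ∈ p.sh) ∧
      ∀ y, 1 ≤ y → y ≤ p.len → ¬ interiorPt q p (etaDel p x) i j y)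

/-- Deleting the point at position `x` of `p` (with `q = p − x`) merges shadings:
some shaded box of `q` corresponds to more than one shaded box of `p`. -/
def MergesShadings (p : MeshPattern) (x : ℕ) (q : MeshPattern) : Prop :=
  ∃ i j, (i, j) ∈ q.sh ∧ ∃ a b a' b', (a, b) ≠ (a', b') ∧ (a, b) ∈ p.sh ∧
    (a', b') ∈ p.sh ∧ inRegion q p (etaDel p x) i j a b ∧
    inRegion q p (etaDel p x) i j a' b'

/-- `f 0 ⋖ f 1 ⋖ ⋯ ⋖ f k` is a maximal chain of length `k` from `a` to `b`. -/
def IsMaxChain (a b : MeshPattern) (k : ℕ) (f : ℕ → MeshPattern) : Prop :=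
  f 0 = a ∧ f k = b ∧ ∀ i < k, CovByM (f i) (f (i + 1))

/-- Underlying permutation of the direct sum `s ⊕ t`. -/
def dsumPerm (s t : MeshPattern) : ℕ → ℕ := fun i =>
  if i ≤ s.len then s.perm i
  else if i ≤ s.len + t.len then t.perm (i - s.len) + s.len
  else 0

/-- Shading of the direct sum `s ⊕ t`: the shadings of `s` and of `t` (translated), where
boxes on the shared boundary are extended to the new boundary (north/east for boxes of
`s`, south/west for boxes of `t`). -/
def dsumSh (s t : MeshPattern) : Finset (ℕ × ℕ) :=
  s.sh ∪ t.sh.image (fun q => (q.1 + s.len, q.2 + s.len)) ∪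
    (s.sh.filter (fun q => q.2 = s.len)).biUnion
      (fun q => (Finset.range (t.len + 1)).image (fun k => (q.1, s.len + k))) ∪
    (s.sh.filter (fun q => q.1 = s.len)).biUnion
      (fun q => (Finset.range (t.len + 1)).image (fun k => (s.len + k, q.2))) ∪
    (t.sh.filter (fun q => q.2 = 0)).biUnion
      (fun q => (Finset.range (s.len + 1)).image (fun k => (q.1 + s.len, k))) ∪
    (t.sh.filter (fun q => q.1 = 0)).biUnion
      (fun q => (Finset.range (s.len + 1)).image (fun k => (k, q.2 + s.len)))

/-- `r = s ⊕ t` is the direct sum of the mesh patterns `s` and `t` (defined when the top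
right corner box of `s` and the bottom left corner box of `t` are not shaded). -/
def IsDSum (s t r : MeshPattern) : Prop :=
  (s.len, s.len) ∉ s.sh ∧ (0, 0) ∉ t.sh ∧
    r.len = s.len + t.len ∧ r.perm = dsumPerm s t ∧ r.sh = dsumSh s t

/-- A mesh pattern is indecomposable if it cannot be written as a direct sum `a ⊕ b`
with neither `a` nor `b` equal to it. -/
def Indecomposable (m : MeshPattern) : Prop :=
  ¬ ∃ s t, s ≠ m ∧ t ≠ m ∧ IsDSum s t m

/-- `SumOfList L m`: `m` is the direct sum of the list `L` of mesh patterns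
(the empty list summing to the empty pattern `ε^∅`). -/
def SumOfList : List MeshPattern → MeshPattern → Prop
  | [], m => m.len = 0 ∧ m.sh = ∅
  | [a], m => a = m
  | a :: b :: rest, m => ∃ r, SumOfList (b :: rest) r ∧ IsDSum a r m

/-- Underlying permutation of the skew sum `s ⊖ t`. -/
def sksumPerm (s t : MeshPattern) : ℕ → ℕ := fun i =>
  if i = 0 then 0
  else if i ≤ s.len then s.perm i + t.len
  else if i ≤ s.len + t.len then t.perm (i - s.len)
  else 0

/-- Shading of the skew sum `s ⊖ t` (s placed to the north west of `t`), with boxes on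
the shared boundary extended to the new boundary. -/
def sksumSh (s t : MeshPattern) : Finset (ℕ × ℕ) :=
  s.sh.image (fun q => (q.1, q.2 + t.len)) ∪ t.sh.image (fun q => (q.1 + s.len, q.2)) ∪
    (s.sh.filter (fun q => q.1 = s.len)).biUnion
      (fun q => (Finset.range (t.len + 1)).image (fun k => (s.len + k, q.2 + t.len))) ∪
    (s.sh.filter (fun q => q.2 = 0)).biUnion
      (fun q => (Finset.range (t.len + 1)).image (fun k => (q.1, k))) ∪
    (t.sh.filter (fun q => q.2 = t.len)).biUnion
      (fun q => (Finset.range (s.len + 1)).image (fun k => (q.1 + s.len, t.len + k))) ∪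
    (t.sh.filter (fun q => q.1 = 0)).biUnion
      (fun q => (Finset.range (s.len + 1)).image (fun k => (k, q.2)))

/-- `r = s ⊖ t` is the skew sum of the mesh patterns `s` and `t` (defined when the bottom
right corner box of `s` and the top left corner box of `t` are not shaded). -/
def IsSkewSum (s t r : MeshPattern) : Prop :=
  (s.len, 0) ∉ s.sh ∧ (0, t.len) ∉ t.sh ∧
    r.len = s.len + t.len ∧ r.perm = sksumPerm s t ∧ r.sh = sksumSh s t

/-- A mesh pattern is skew-indecomposable if it cannot be written as a skew sum `a ⊖ b`
with neither `a` nor `b` equal to it. -/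
def SkewIndecomposable (m : MeshPattern) : Prop :=
  ¬ ∃ s t, s ≠ m ∧ t ≠ m ∧ IsSkewSum s t m

/-- Connectivity (zig-zag of comparabilities) inside a subset `I` of the mesh pattern
poset. -/
def ConnIn (I : Set MeshPattern) (a b : MeshPattern) : Prop :=
  Relation.ReflTransGen (fun u v => u ∈ I ∧ v ∈ I ∧ (u ≤ v ∨ v ≤ u)) a b

/-- The interval `[m, p]` is strongly disconnected: its open interior has at least two
connected components each containing more than one element. -/
def StronglyDisconnectedInterval (m p : MeshPattern) : Prop :=
  ∃ a b, (m < a ∧ a < p) ∧ (m < b ∧ b < p) ∧ ¬ ConnIn {c | m < c ∧ c < p} a b ∧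
    (∃ a', (m < a' ∧ a' < p) ∧ a' ≠ a ∧ ConnIn {c | m < c ∧ c < p} a a') ∧
    (∃ b', (m < b' ∧ b' < p) ∧ b' ≠ b ∧ ConnIn {c | m < c ∧ c < p} b b')

/-- The occurrence of `m` in `m ⊕ m` (or `m ⊖ m`) as the first `|m|` points. -/
def eta1 (m : MeshPattern) : ℕ → ℕ := fun i => if 1 ≤ i ∧ i ≤ m.len then i else 0

/-- The occurrence of `m` in `m ⊕ m` (or `m ⊖ m`) as the last `|m|` points. -/
def eta2 (m : MeshPattern) : ℕ → ℕ := fun i => if 1 ≤ i ∧ i ≤ m.len then i + m.len else 0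

/-- `i` (with `2 ≤ i ≤ len`) is the position of an adjacency tail: the letter at
position `i` differs by one from the letter at position `i - 1`. -/
def IsAdjTail (m : MeshPattern) (i : ℕ) : Prop :=
  2 ≤ i ∧ i ≤ m.len ∧ (m.perm i = m.perm (i - 1) + 1 ∨ m.perm (i - 1) = m.perm i + 1)

open Classical in
/-- `adj(cl m)`: the number of adjacency tails of the underlying permutation of `m`. -/
noncomputable def adjCount (m : MeshPattern) : ℕ :=
  ((Finset.range (m.len + 1)).filter (fun i => IsAdjTail m i)).card

/-- The total number of mesh patterns of length `n`. -/
def Tcount (n : ℕ) : ℕ := n.factorial * 2 ^ ((n + 1) ^ 2)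

end MeshPattern

/-- Binary words, partially ordered by (not necessarily contiguous) subword containment:
the poset `𝓦`. -/
structure Word where
  toList : List Bool

instance : LE Word := ⟨fun u w => u.toList.Sublist w.toList⟩

/-- The binary word associated to a mesh pattern `m` in the class `Γ`: it has length
`|m| - 1`, and for each letter `i` with `2 ≤ i ≤ |m|` the corresponding entry is
`false` (i.e. `0`) if the letter `i` appears before the letter `1` in `cl m`,
and `true` (i.e. `1`) otherwise. -/
noncomputable def MeshPattern.wordOf (m : MeshPattern) : List Bool :=
  (List.range (m.len - 1)).map (fun k => if m.pos (k + 2) < m.pos 1 then false else true)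

namespace MeshPattern


section Aux
open Classical

theorem ext' {m p : MeshPattern} (h1 : m.len = p.len) (h2 : m.perm = p.perm)
    (h3 : m.sh = p.sh) : m = p := by
  cases m; cases p
  simp only at h1 h2 h3
  subst h1; subst h2; subst h3
  rfl

theorem eps0_len : eps0.len = 0 := rfl
theorem eps0_sh : eps0.sh = ∅ := rfl
theorem eps0_perm (i : ℕ) : eps0.perm i = 0 := by
  show (if 1 ≤ i ∧ i ≤ 0 then i else 0) = 0
  rw [if_neg (by omega)]

theorem one0_len : one0.len = 1 := rfl
theorem one0_sh : one0.sh = ∅ := rfl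
theorem one0_perm (i : ℕ) : one0.perm i = if 1 ≤ i ∧ i ≤ 1 then i else 0 := rfl
theorem dim_one0 : dim one0 = 1 := rfl

theorem eps00_len : eps00.len = 0 := rfl
theorem eps00_sh : eps00.sh = {(0, 0)} := rfl
theorem eps00_perm (i : ℕ) : eps00.perm i = 0 := by
  show (if 1 ≤ i ∧ i ≤ 0 then i else 0) = 0
  rw [if_neg (by omega)]
theorem dim_eps00 : dim eps00 = 1 := rfl

theorem one0_ne_eps0 : one0 ≠ eps0 := by
  intro h
  have : one0.len = eps0.len := congrArg len h
  rw [one0_len, eps0_len] at this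
  omega

theorem eps0_le (p : MeshPattern) : eps0 ≤ p := by
  refine ⟨fun _ => 0, ?_, ?_, ?_, ?_, ?_, ?_⟩
  · intro i _; rfl
  · intro i h1 h2; rw [eps0_len] at h2; omega
  · intro i j h1 h2 h3; rw [eps0_len] at h3; omega
  · intro i j h1 h2 h3 h4; rw [eps0_len] at h2; omega
  · intro q hq; rw [eps0_sh] at hq; exact absurd hq (Finset.notMem_empty q)
  · intro q hq; rw [eps0_sh] at hq; exact absurd hq (Finset.notMem_empty q)

theorem pos_spec (m : MeshPattern) (v : ℕ) (h1 : 1 ≤ v) (h2 : v ≤ m.len) :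
    1 ≤ m.pos v ∧ m.pos v ≤ m.len ∧ m.perm (m.pos v) = v := by
  obtain ⟨i, hi1, hi2, hi3⟩ := m.perm_surj v h1 h2
  have he : m.perm (m.pos v) = v := Function.invFun_eq ⟨i, hi3⟩
  by_cases hp : 1 ≤ m.pos v ∧ m.pos v ≤ m.len
  · exact ⟨hp.1, hp.2, he⟩
  · exfalso
    have := m.perm_zero (m.pos v) (by omega)
    omega

theorem le_eta {d c : MeshPattern} {η : ℕ → ℕ} (h : IsOcc d c η) :
    ∀ i, 1 ≤ i → i ≤ d.len → i ≤ η i := by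
  intro i
  induction i with
  | zero => omega
  | succ k ih =>
    intro _ hk
    rcases Nat.eq_zero_or_pos k with h0 | h0
    · subst h0
      exact (h.mem 1 le_rfl hk).1
    · have h1 := h.mono k (k + 1) h0 (by omega) hk
      have h2 := ih h0 (by omega)
      omega

theorem len_le {d c : MeshPattern} {η : ℕ → ℕ} (h : IsOcc d c η) : d.len ≤ c.len := by
  rcases Nat.eq_zero_or_pos d.len with h0 | h0
  · omega
  · have h1 := le_eta h d.len h0 le_rfl
    have h2 := (h.mem d.len h0 le_rfl).2
    omega

theorem colExt_lt {d c : MeshPattern} {η : ℕ → ℕ} (h : IsOcc d c η) {i : ℕ}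
    (hi : i ≤ d.len) : colExt d c η i < colExt d c η (i + 1) := by
  unfold colExt
  rcases Nat.eq_zero_or_pos i with h0 | h0
  · subst h0
    rw [if_pos rfl]
    simp only [Nat.zero_add]
    rw [if_neg one_ne_zero]
    by_cases h1 : 1 ≤ d.len
    · rw [if_pos h1]; exact (h.mem 1 le_rfl h1).1
    · rw [if_neg h1]; omega
  · rw [if_neg (by omega), if_pos hi, if_neg (by omega)]
    by_cases h1 : i + 1 ≤ d.len
    · rw [if_pos h1]; exact h.mono i (i + 1) h0 (by omega) h1
    · rw [if_neg h1]
      have := (h.mem i h0 hi).2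
      omega

theorem valExt_lt {d c : MeshPattern} {η : ℕ → ℕ} (h : IsOcc d c η) {j : ℕ}
    (hj : j ≤ d.len) : valExt d c η j < valExt d c η (j + 1) := by
  unfold valExt
  rcases Nat.eq_zero_or_pos j with h0 | h0
  · subst h0
    rw [if_pos rfl]
    simp only [Nat.zero_add]
    rw [if_neg one_ne_zero]
    by_cases h1 : 1 ≤ d.len
    · rw [if_pos h1]
      obtain ⟨hp1, hp2, _⟩ := pos_spec d 1 le_rfl h1
      have hm := h.mem _ hp1 hp2
      exact (c.perm_mem _ hm.1 hm.2).1
    · rw [if_neg h1]; omega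
  · rw [if_neg (by omega), if_pos hj, if_neg (by omega)]
    obtain ⟨hp1, hp2, hp3⟩ := pos_spec d j h0 hj
    by_cases h1 : j + 1 ≤ d.len
    · rw [if_pos h1]
      obtain ⟨hq1, hq2, hq3⟩ := pos_spec d (j + 1) (by omega) h1
      exact (h.pattern _ _ hp1 hp2 hq1 hq2).1 (by rw [hp3, hq3]; omega)
    · rw [if_neg h1]
      have hm := h.mem _ hp1 hp2
      have := (c.perm_mem _ hm.1 hm.2).2
      omega

theorem colExt_mono {d c : MeshPattern} {η : ℕ → ℕ} (h : IsOcc d c η) {i i' : ℕ}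
    (hii : i < i') (hi' : i' ≤ d.len + 1) : colExt d c η i < colExt d c η i' := by
  induction i' with
  | zero => omega
  | succ k ih =>
    rcases Nat.lt_or_ge i k with hk | hk
    · exact (ih hk (by omega)).trans (colExt_lt h (by omega))
    · have : i = k := by omega
      subst this
      exact colExt_lt h (by omega)

theorem valExt_mono {d c : MeshPattern} {η : ℕ → ℕ} (h : IsOcc d c η) {i i' : ℕ}
    (hii : i < i') (hi' : i' ≤ d.len + 1) : valExt d c η i < valExt d c η i' := by
  induction i' with
  | zero => omega
  | succ k ih =>
    rcases Nat.lt_or_ge i k with hk | hk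
    · exact (ih hk (by omega)).trans (valExt_lt h (by omega))
    · have : i = k := by omega
      subst this
      exact valExt_lt h (by omega)

theorem sh_card_le {d c : MeshPattern} {η : ℕ → ℕ} (h : IsOcc d c η) :
    d.sh.card ≤ c.sh.card := by
  apply Finset.card_le_card_of_injOn (fun q => (colExt d c η q.1, valExt d c η q.2))
  · intro q hq
    obtain ⟨hq1, hq2⟩ := d.sh_mem q hq
    exact h.shaded q hq (colExt d c η q.1) (valExt d c η q.2)
      ⟨le_rfl, colExt_lt h hq1, le_rfl, valExt_lt h hq2⟩
  · intro q hq q' hq' heq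
    simp only [Finset.mem_coe] at hq hq'
    obtain ⟨hq1, hq2⟩ := d.sh_mem q hq
    obtain ⟨hq1', hq2'⟩ := d.sh_mem q' hq'
    simp only [Prod.mk.injEq] at heq
    have e1 : q.1 = q'.1 := by
      by_contra hne
      rcases Nat.lt_or_ge q.1 q'.1 with hlt | hge
      · exact absurd heq.1 (Nat.ne_of_lt (colExt_mono h hlt (by omega)))
      · exact absurd heq.1.symm (Nat.ne_of_lt (colExt_mono h (by omega) (by omega)))
    have e2 : q.2 = q'.2 := by
      by_contra hne
      rcases Nat.lt_or_ge q.2 q'.2 with hlt | hge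
      · exact absurd heq.2 (Nat.ne_of_lt (valExt_mono h hlt (by omega)))
      · exact absurd heq.2.symm (Nat.ne_of_lt (valExt_mono h (by omega) (by omega)))
    exact Prod.ext e1 e2

theorem card_filter_lt (m : MeshPattern) (i : ℕ) (h1 : 1 ≤ i) (h2 : i ≤ m.len) :
    ((Finset.Icc 1 m.len).filter (fun j => m.perm j < m.perm i)).card = m.perm i - 1 := by
  have hv := m.perm_mem i h1 h2
  rw [show m.perm i - 1 = (Finset.Icc 1 (m.perm i - 1)).card by rw [Nat.card_Icc]; omega]
  apply Finset.card_bij (fun j _ => m.perm j)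
  · intro j hj
    simp only [Finset.mem_filter, Finset.mem_Icc] at hj ⊢
    have := m.perm_mem j hj.1.1 hj.1.2
    omega
  · intro j hj j' hj' he
    simp only [Finset.mem_filter, Finset.mem_Icc] at hj hj'
    exact m.perm_inj j j' hj.1.1 hj.1.2 hj'.1.1 hj'.1.2 he
  · intro v hv'
    simp only [Finset.mem_Icc] at hv'
    obtain ⟨j, hj1, hj2, hj3⟩ := m.perm_surj v hv'.1 (by omega)
    refine ⟨j, ?_, hj3⟩
    simp only [Finset.mem_filter, Finset.mem_Icc]
    exact ⟨⟨hj1, hj2⟩, by omega⟩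

theorem eq_of_dim_le {d c : MeshPattern} {η : ℕ → ℕ} (h : IsOcc d c η)
    (hd : dim c ≤ dim d) : d = c := by
  have hcard := sh_card_le h
  have hl := len_le h
  unfold dim at hd
  have hlen : d.len = c.len := by omega
  have hstep : ∀ t i, 1 ≤ i → i + t ≤ d.len → η i + t ≤ η (i + t) := by
    intro t
    induction t with
    | zero => intro i _ _; simp
    | succ k ih =>
      intro i h1 h2
      have ha := ih i h1 (by omega)
      have hb := h.mono (i + k) (i + k + 1) (by omega) (by omega) (by omega)
      rw [show i + (k + 1) = i + k + 1 by omega]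
      omega
  have hid : ∀ i, 1 ≤ i → i ≤ d.len → η i = i := by
    intro i h1 h2
    have hge := le_eta h i h1 h2
    have hs := hstep (d.len - i) i h1 (by omega)
    rw [show i + (d.len - i) = d.len by omega] at hs
    have h3 : η d.len ≤ c.len := (h.mem d.len (by omega) le_rfl).2
    omega
  have hperm : d.perm = c.perm := by
    funext i
    by_cases hi : 1 ≤ i ∧ i ≤ d.len
    · have hA := card_filter_lt d i hi.1 hi.2
      have hB := card_filter_lt c i hi.1 (by omega)
      have hAB : ((Finset.Icc 1 d.len).filter (fun j => d.perm j < d.perm i))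
          = ((Finset.Icc 1 c.len).filter (fun j => c.perm j < c.perm i)) := by
        rw [← hlen]
        apply Finset.filter_congr
        intro j hj
        simp only [Finset.mem_Icc] at hj
        have hpat := h.pattern j i hj.1 hj.2 hi.1 hi.2
        rw [hid j hj.1 hj.2, hid i hi.1 hi.2] at hpat
        simp only [hpat]
      rw [hAB, hB] at hA
      have hd1 := (d.perm_mem i hi.1 hi.2).1
      have hc1 := (c.perm_mem i hi.1 (by omega)).1
      omega
    · rw [d.perm_zero i (by omega), c.perm_zero i (by omega)]
  have hcolid : ∀ k, k ≤ d.len + 1 → colExt d c η k = k := by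
    intro k hk
    unfold colExt
    rcases Nat.eq_zero_or_pos k with h0 | h0
    · simp [h0]
    · by_cases h1 : k ≤ d.len
      · rw [if_neg (by omega), if_pos h1, hid k h0 h1]
      · rw [if_neg (by omega), if_neg h1]; omega
  have hvalid : ∀ k, k ≤ d.len + 1 → valExt d c η k = k := by
    intro k hk
    unfold valExt
    rcases Nat.eq_zero_or_pos k with h0 | h0
    · simp [h0]
    · by_cases h1 : k ≤ d.len
      · rw [if_neg (by omega), if_pos h1]
        obtain ⟨hp1, hp2, hp3⟩ := pos_spec d k h0 h1
        rw [hid _ hp1 hp2, ← hperm, hp3]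
      · rw [if_neg (by omega), if_neg h1]; omega
  have hsub : d.sh ⊆ c.sh := by
    intro q hq
    obtain ⟨hq1, hq2⟩ := d.sh_mem q hq
    refine h.shaded q hq q.1 q.2 ⟨?_, ?_, ?_, ?_⟩
    · rw [hcolid _ (by omega)]
    · rw [hcolid _ (by omega)]; omega
    · rw [hvalid _ (by omega)]
    · rw [hvalid _ (by omega)]; omega
  exact ext' hlen hperm (Finset.eq_of_subset_of_card_le hsub (by omega))

theorem dim_lt_of_lt {d c : MeshPattern} (hle : d ≤ c) (hne : d ≠ c) :
    dim d < dim c := by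
  obtain ⟨η, h⟩ := hle
  rcases Nat.lt_or_ge (dim d) (dim c) with h' | h'
  · exact h'
  · exact absurd (eq_of_dim_le h h') hne

theorem eq_eps0_of_dim_zero {c : MeshPattern} (hc : dim c = 0) : c = eps0 := by
  unfold dim at hc
  have hlen : c.len = 0 := by omega
  have hsh : c.sh = ∅ := Finset.card_eq_zero.mp (by omega)
  refine ext' (by rw [hlen, eps0_len]) ?_ (by rw [hsh, eps0_sh])
  funext i
  rw [c.perm_zero i (by omega), eps0_perm]

theorem eq_of_dim_one {c : MeshPattern} (hc : dim c = 1) : c = one0 ∨ c = eps00 := by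
  unfold dim at hc
  rcases Nat.eq_zero_or_pos c.len with h0 | h0
  · right
    have hcard : c.sh.card = 1 := by omega
    obtain ⟨a, ha⟩ := Finset.card_eq_one.mp hcard
    have ha0 : a = (0, 0) := by
      have hm := c.sh_mem a (ha ▸ Finset.mem_singleton_self a)
      rw [h0] at hm
      exact Prod.ext (by omega) (by omega)
    refine ext' (by rw [h0, eps00_len]) ?_ (by rw [ha, ha0, eps00_sh])
    funext i
    rw [c.perm_zero i (by omega), eps00_perm]
  · left
    have hlen : c.len = 1 := by omega
    have hsh : c.sh = ∅ := Finset.card_eq_zero.mp (by omega)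
    refine ext' (by rw [hlen, one0_len]) ?_ (by rw [hsh, one0_sh])
    funext i
    by_cases hi : i = 1
    · subst hi
      have hm := c.perm_mem 1 le_rfl (by omega)
      rw [one0_perm, if_pos (by omega)]
      omega
    · rw [c.perm_zero i (by omega), one0_perm, if_neg (by omega)]

theorem eq_eps00_of_le {p : MeshPattern} (hp : eps00 ≤ p) : p = eps00 := by
  obtain ⟨η, h⟩ := hp
  have hmem : (0, 0) ∈ eps00.sh := by rw [eps00_sh]; exact Finset.mem_singleton_self _
  have hc0 : colExt eps00 p η 0 = 0 := by unfold colExt; rw [if_pos rfl]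
  have hc1 : colExt eps00 p η 1 = p.len + 1 := by
    unfold colExt
    rw [if_neg one_ne_zero, if_neg (by rw [eps00_len]; omega)]
  have hv0 : valExt eps00 p η 0 = 0 := by unfold valExt; rw [if_pos rfl]
  have hv1 : valExt eps00 p η 1 = p.len + 1 := by
    unfold valExt
    rw [if_neg one_ne_zero, if_neg (by rw [eps00_len]; omega)]
  have hlen : p.len = 0 := by
    by_contra h0
    have h1 : 1 ≤ p.len := by omega
    have hpm := p.perm_mem 1 le_rfl h1
    refine h.no_point (0, 0) hmem 1 le_rfl h1 ?_
    unfold interiorPt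
    rw [hc0, hc1, hv0, hv1]
    exact ⟨by omega, by omega, by omega, by omega⟩
  have hin : (0, 0) ∈ p.sh := by
    refine h.shaded (0, 0) hmem 0 0 ?_
    unfold inRegion
    rw [hc0, hc1, hv0, hv1]
    exact ⟨le_rfl, by omega, le_rfl, by omega⟩
  have hsh : p.sh = {(0, 0)} := by
    apply Finset.Subset.antisymm
    · intro q hq
      have hm := p.sh_mem q hq
      rw [hlen] at hm
      simp only [Finset.mem_singleton]
      exact Prod.ext (by omega) (by omega)
    · intro q hq
      simp only [Finset.mem_singleton] at hq
      subst hq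
      exact hin
  refine ext' (by rw [hlen, eps00_len]) ?_ (by rw [hsh, eps00_sh])
  funext i
  rw [p.perm_zero i (by omega), eps00_perm]

theorem one0_le {c : MeshPattern} (hc : 1 ≤ c.len) : one0 ≤ c := by
  refine ⟨fun i => if i = 1 then 1 else 0, ?_, ?_, ?_, ?_, ?_, ?_⟩
  · intro i hi
    rw [one0_len] at hi
    rw [if_neg (by omega)]
  · intro i h1 h2
    rw [one0_len] at h2
    have : i = 1 := by omega
    subst this
    rw [if_pos rfl]
    exact ⟨le_rfl, hc⟩
  · intro i j h1 h2 h3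
    rw [one0_len] at h3
    omega
  · intro i j h1 h2 h3 h4
    rw [one0_len] at h2 h4
    have hi : i = 1 := by omega
    have hj : j = 1 := by omega
    subst hi; subst hj
    simp
  · intro q hq
    rw [one0_sh] at hq
    exact absurd hq (Finset.notMem_empty q)
  · intro q hq
    rw [one0_sh] at hq
    exact absurd hq (Finset.notMem_empty q)

open Classical in
noncomputable def Mval (c : MeshPattern) : ℤ :=
  if c = eps0 then 1 else if dim c = 1 then -1 else 0

theorem Mval_support {c : MeshPattern} (hc : Mval c ≠ 0) :
    c = eps0 ∨ c = one0 ∨ c = eps00 := by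
  unfold Mval at hc
  split_ifs at hc with h1 h2
  · exact Or.inl h1
  · rcases eq_of_dim_one h2 with h | h
    · exact Or.inr (Or.inl h)
    · exact Or.inr (Or.inr h)
  · exact absurd rfl hc

theorem muFuel_eps0_eq (n : ℕ) : ∀ c : MeshPattern, dim c ≤ n →
    muFuel (· ≤ ·) n eps0 c = Mval c := by
  induction n with
  | zero =>
    intro c hc
    have hce : c = eps0 := eq_eps0_of_dim_zero (by omega)
    subst hce
    simp [muFuel, Mval]
  | succ n ih =>
    intro c hc
    by_cases hce : c = eps0
    · subst hce
      simp [muFuel, Mval]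
    · have hne : eps0 ≠ c := Ne.symm hce
      rw [show muFuel (· ≤ ·) (n + 1) eps0 c =
          - ∑ᶠ d ∈ {d | eps0 ≤ d ∧ d ≤ c ∧ d ≠ c}, muFuel (· ≤ ·) n eps0 d from by
        rw [muFuel, if_neg hne, if_pos (eps0_le c)]]
      have hcong : ∑ᶠ d ∈ {d | eps0 ≤ d ∧ d ≤ c ∧ d ≠ c}, muFuel (· ≤ ·) n eps0 d
          = ∑ᶠ d ∈ {d | eps0 ≤ d ∧ d ≤ c ∧ d ≠ c}, Mval d := by
        refine finsum_mem_congr rfl ?_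
        intro d hd
        obtain ⟨-, hdc, hdnc⟩ := hd
        exact ih d (by have := dim_lt_of_lt hdc hdnc; omega)
      rw [hcong]
      rcases Nat.lt_or_ge (dim c) 2 with hdim | hdim
      · have hd1 : dim c = 1 := by
          rcases Nat.eq_zero_or_pos (dim c) with h0 | h0
          · exact absurd (eq_eps0_of_dim_zero h0) hce
          · omega
        have hSeq : {d | eps0 ≤ d ∧ d ≤ c ∧ d ≠ c} = {eps0} := by
          ext d
          simp only [Set.mem_setOf_eq, Set.mem_singleton_iff]
          constructor
          · rintro ⟨-, hdc, hdnc⟩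
            have := dim_lt_of_lt hdc hdnc
            exact eq_eps0_of_dim_zero (by omega)
          · rintro rfl
            exact ⟨eps0_le _, eps0_le _, hne⟩
        rw [hSeq, finsum_mem_singleton]
        unfold Mval
        rw [if_pos rfl, if_neg hce, if_pos hd1]
      · have hlen1 : 1 ≤ c.len := by
          by_contra h0
          have hl0 : c.len = 0 := by omega
          have hsub : c.sh ⊆ {(0, 0)} := by
            intro q hq
            have hm := c.sh_mem q hq
            rw [hl0] at hm
            simp only [Finset.mem_singleton]
            exact Prod.ext (by omega) (by omega)
          have hcc := Finset.card_le_card hsub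
          rw [Finset.card_singleton] at hcc
          unfold dim at hdim
          omega
        have hc00 : c ≠ eps00 := by
          intro hh
          rw [hh, dim_eps00] at hdim
          omega
        have hone : one0 ≠ c := by
          intro hh
          rw [← hh, dim_one0] at hdim
          omega
        have hSsupp : {d | eps0 ≤ d ∧ d ≤ c ∧ d ≠ c} ∩ Function.support Mval
            = {eps0, one0} := by
          ext d
          simp only [Set.mem_inter_iff, Set.mem_setOf_eq, Function.mem_support,
            Set.mem_insert_iff, Set.mem_singleton_iff]
          constructor
          · rintro ⟨⟨-, hdc, hdnc⟩, hMd⟩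
            rcases Mval_support hMd with hh | hh | hh
            · exact Or.inl hh
            · exact Or.inr hh
            · exfalso
              rw [hh] at hdc
              exact hc00 (eq_eps00_of_le hdc)
          · rintro (rfl | rfl)
            · refine ⟨⟨eps0_le _, eps0_le _, hne⟩, ?_⟩
              unfold Mval
              rw [if_pos rfl]
              omega
            · refine ⟨⟨eps0_le _, one0_le hlen1, hone⟩, ?_⟩
              unfold Mval
              rw [if_neg one0_ne_eps0, if_pos dim_one0]
              omega
        rw [← finsum_mem_inter_support, hSsupp,
          finsum_mem_pair (Ne.symm one0_ne_eps0)]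
        unfold Mval
        rw [if_pos rfl, if_neg one0_ne_eps0, if_pos dim_one0, if_neg hce,
          if_neg (by omega : ¬ dim c = 1)]
        ring

end Aux

open Classical in
/-- The Möbius function above the empty mesh patterns `ε^∅` and `ε^{(0,0)}`:
`μ(ε^A, p) = 1` if `p = ε^A`; `μ(ε^∅, p) = -1` if `|cl p| + |sh p| = 1`; and `0`
otherwise.  In particular `ε^{(0,0)}` is contained in no mesh pattern other than
itself. -/
theorem mu_of_empty_patterns :
    (∀ p : MeshPattern, eps0 ≤ p →
      mu eps0 p = if p = eps0 then 1 else if p.len + p.sh.card = 1 then -1 else 0) ∧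
    (∀ p : MeshPattern, eps00 ≤ p → mu eps00 p = if p = eps00 then 1 else 0) ∧
    (∀ p : MeshPattern, eps00 ≤ p → p = eps00) := by
  refine ⟨?_, ?_, fun p hp => eq_eps00_of_le hp⟩
  · intro p _
    rw [mu, muFuel_eps0_eq (p.dim + 1) p (by omega)]
    unfold Mval dim
    split_ifs <;> rfl
  · intro p hp
    have hpe := eq_eps00_of_le hp
    subst hpe
    rw [if_pos rfl]
    simp [mu, muFuel]

end MeshPattern
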